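/- Let r ≥ 1 be an integer and let a ≥ 0, b ≥ 0 and γ be real numbers. Then the integral over the unbounded region {λ ∈ ℝ^r : λ_1 > λ_2 > … > λ_r > 0} of ∏_{j=1}^r (1+λ_j²)^{−γ} · ∏_{j=1}^r λ_j^{2b+1} · ∏_{1≤j<k≤r} (λ_j² − λ_k²)^a with respect to Lebesgue measure equals 2^{−r} times the integral over the bounded region {s ∈ ℝ^r : 1 > s_1 > s_2 > … > s_r > 0} of ∏_{j=1}^r (1−s_j)^{γ−2−b−(r−1)a} · ∏_{j=1}^r s_j^{b} · ∏_{1≤j<k≤r} (s_j − s_k)^a, the equality holding as an identity of (possibly infinite) integrals of nonnegative functions. -/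

import Mathlib

open MeasureTheory

noncomputable def gfun (t : ℝ) : ℝ := Real.sqrt (t / (1 - t))
noncomputable def dfun (t : ℝ) : ℝ := 1 / (2 * Real.sqrt (t / (1 - t))) * (1 / (1 - t) ^ 2)

lemma gfun_hasDerivAt {t : ℝ} (h0 : 0 < t) (h1 : t < 1) : HasDerivAt gfun (dfun t) t := by
  have hw : 0 < 1 - t := by linarith
  have hu : HasDerivAt (fun t : ℝ => t / (1 - t)) (1 / (1 - t) ^ 2) t := by
    have := (hasDerivAt_id t).div ((hasDerivAt_id t).const_sub 1) (by positivity)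
    refine this.congr_deriv ?_
    simp only [id_eq]
    ring
  have hne : t / (1 - t) ≠ 0 := by positivity
  exact (Real.hasDerivAt_sqrt hne).comp t hu

lemma gfun_sq {t : ℝ} (h0 : 0 < t) (h1 : t < 1) : gfun t ^ 2 = t / (1 - t) := by
  have hw : 0 < 1 - t := by linarith
  exact Real.sq_sqrt (by positivity)

lemma gfun_pos {t : ℝ} (h0 : 0 < t) (h1 : t < 1) : 0 < gfun t := by
  have hw : 0 < 1 - t := by linarith
  exact Real.sqrt_pos.2 (by positivity)

lemma gfun_rpow {t : ℝ} (h0 : 0 < t) (h1 : t < 1) :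
    gfun t = t ^ ((1:ℝ)/2) * (1 - t) ^ (-((1:ℝ)/2)) := by
  have hw : (0:ℝ) < 1 - t := by linarith
  rw [gfun, Real.sqrt_eq_rpow, Real.div_rpow h0.le hw.le, div_eq_mul_inv,
    ← Real.rpow_neg hw.le]

lemma key_scalar (a b γ : ℝ) (n : ℕ) {t : ℝ} (h0 : 0 < t) (h1 : t < 1) :
    (1 + gfun t ^ 2) ^ (-γ) * gfun t ^ (2*b+1) * (((1-t)⁻¹) ^ a) ^ n * |dfun t| =
    1/2 * (1 - t) ^ (γ - 2 - b - (n:ℝ) * a) * t ^ b := by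
  have hw0 : (0:ℝ) < 1 - t := by linarith
  have h1g : (1 : ℝ) + gfun t ^ 2 = (1-t)⁻¹ := by
    rw [gfun_sq h0 h1]; field_simp; ring
  have hA : (((1-t):ℝ)⁻¹) ^ (-γ) = (1-t) ^ γ := by
    rw [Real.inv_rpow hw0.le, Real.rpow_neg hw0.le, inv_inv]
  have hB : (gfun t) ^ (2*b+1) = t ^ (b + 1/2) * (1-t) ^ (-(b + 1/2)) := by
    have hg : gfun t = (t / (1-t)) ^ ((1:ℝ)/2) := by
      rw [gfun, Real.sqrt_eq_rpow]
    rw [hg, ← Real.rpow_mul (by positivity), show (1:ℝ)/2*(2*b+1) = b + 1/2 by ring,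
      Real.div_rpow h0.le hw0.le, div_eq_mul_inv, ← Real.rpow_neg hw0.le]
  have hC : ((((1-t):ℝ)⁻¹) ^ a) ^ n = (1-t) ^ (-((n:ℝ) * a)) := by
    rw [Real.inv_rpow hw0.le, ← Real.rpow_neg hw0.le,
      ← Real.rpow_natCast ((1-t) ^ (-a)) n, ← Real.rpow_mul hw0.le]
    congr 1; ring
  have hD : |dfun t| = 1/2 * t ^ (-((1:ℝ)/2)) * (1-t) ^ (-(3:ℝ)/2) := by
    have hnn : 0 ≤ dfun t := by rw [dfun]; positivity
    rw [abs_of_nonneg hnn, dfun, Real.sqrt_eq_rpow, Real.div_rpow h0.le hw0.le,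
      div_eq_mul_inv (t ^ ((1:ℝ)/2)), ← Real.rpow_neg hw0.le]
    have h32 : ((1-t):ℝ) ^ (-(3:ℝ)/2) = (1-t) ^ (((1:ℝ)/2)) * ((1-t)^2)⁻¹ := by
      rw [show ((1-t):ℝ)^2 = (1-t) ^ ((2:ℕ):ℝ) by rw [Real.rpow_natCast],
        ← Real.rpow_neg hw0.le, ← Real.rpow_add hw0]
      norm_num
    rw [h32]
    have hp1 : (0:ℝ) < t ^ ((1:ℝ)/2) := Real.rpow_pos_of_pos h0 _
    have hp2 : (0:ℝ) < (1-t) ^ ((1:ℝ)/2) := Real.rpow_pos_of_pos hw0 _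
    rw [Real.rpow_neg h0.le, Real.rpow_neg hw0.le]
    field_simp
  rw [h1g, hA, hB, hC, hD]
  have h5 : ((1-t):ℝ) ^ (γ-2-b-(n:ℝ)*a)
      = (1-t)^γ * ((1-t)^(-(b+1/2)) * ((1-t)^(-((n:ℝ)*a)) * (1-t)^(-(3:ℝ)/2))) := by
    rw [← Real.rpow_add hw0, ← Real.rpow_add hw0, ← Real.rpow_add hw0]
    congr 1; ring
  have h6 : t ^ b = t ^ (b+1/2) * t ^ (-((1:ℝ)/2)) := by
    rw [← Real.rpow_add h0]; norm_num
  rw [h5, h6]; ring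

lemma pair_prod {n : ℕ} (c : Fin n → ℝ) :
    (∏ j, ∏ k ∈ Finset.Ioi j, (c j * c k)) = ∏ j, c j ^ (n - 1) := by
  have hswap : (∏ j : Fin n, ∏ k ∈ Finset.Ioi j, c k)
      = ∏ k : Fin n, ∏ _j ∈ Finset.Iio k, c k :=
    Finset.prod_comm' (fun x y => by simp)
  calc (∏ j, ∏ k ∈ Finset.Ioi j, (c j * c k))
      = (∏ j, c j ^ (Finset.Ioi j).card) * ∏ j : Fin n, ∏ k ∈ Finset.Ioi j, c k := by
        rw [← Finset.prod_mul_distrib]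
        exact Finset.prod_congr rfl fun j _ => by
          rw [Finset.prod_mul_distrib, Finset.prod_const]
    _ = (∏ j, c j ^ (n - 1 - (j:ℕ))) * ∏ k : Fin n, c k ^ (k:ℕ) := by
        rw [hswap]
        simp [Fin.card_Ioi, Fin.card_Iio]
    _ = ∏ j, c j ^ (n - 1) := by
        rw [← Finset.prod_mul_distrib]
        refine Finset.prod_congr rfl fun j _ => ?_
        rw [← pow_add]
        congr 1
        have := j.isLt
        omega

lemma pointwise_eq (r : ℕ) (hr : 1 ≤ r) (a b γ : ℝ) (s : Fin r → ℝ)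
    (hanti : StrictAnti s) (h0 : ∀ j, 0 < s j) (h1 : ∀ j, s j < 1) :
    |∏ j, dfun (s j)| *
      ((∏ j, (1 + gfun (s j) ^ 2) ^ (-γ)) * (∏ j, gfun (s j) ^ (2 * b + 1)) *
        ∏ j, ∏ k ∈ Finset.Ioi j, (gfun (s j) ^ 2 - gfun (s k) ^ 2) ^ a) =
    (1/2 : ℝ) ^ r *
      ((∏ j, (1 - s j) ^ (γ - 2 - b - ((r : ℝ) - 1) * a)) * (∏ j, (s j) ^ b) *
        ∏ j, ∏ k ∈ Finset.Ioi j, (s j - s k) ^ a) := by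
  have hw : ∀ j, (0:ℝ) < 1 - s j := fun j => by linarith [h1 j]
  set c : Fin r → ℝ := fun j => ((1 - s j)⁻¹) ^ a with hc
  have hpair : (∏ j, ∏ k ∈ Finset.Ioi j, (gfun (s j) ^ 2 - gfun (s k) ^ 2) ^ a)
      = (∏ j, ∏ k ∈ Finset.Ioi j, ((s j - s k) ^ a * (c j * c k))) := by
    refine Finset.prod_congr rfl fun j _ => Finset.prod_congr rfl fun k hk => ?_
    have hjk : j < k := Finset.mem_Ioi.1 hk
    have hlt : s k < s j := hanti hjk
    have hdiff : gfun (s j) ^ 2 - gfun (s k) ^ 2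
        = (s j - s k) * ((1 - s j)⁻¹ * (1 - s k)⁻¹) := by
      have hj' : (1 : ℝ) - s j ≠ 0 := ne_of_gt (hw j)
      have hk' : (1 : ℝ) - s k ≠ 0 := ne_of_gt (hw k)
      rw [gfun_sq (h0 j) (h1 j), gfun_sq (h0 k) (h1 k)]
      field_simp
      ring
    rw [hdiff, Real.mul_rpow (by linarith) (by have := hw j; have := hw k; positivity),
      Real.mul_rpow (by have := hw j; positivity) (by have := hw k; positivity)]
  have hpair2 : (∏ j, ∏ k ∈ Finset.Ioi j, ((s j - s k) ^ a * (c j * c k)))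
      = (∏ j, ∏ k ∈ Finset.Ioi j, (s j - s k) ^ a) * ∏ j, c j ^ (r - 1) := by
    rw [← pair_prod c, ← Finset.prod_mul_distrib]
    exact Finset.prod_congr rfl fun j _ => by rw [← Finset.prod_mul_distrib]
  have hcast : ((r - 1 : ℕ) : ℝ) = (r:ℝ) - 1 := by
    rw [Nat.cast_sub hr]; norm_num
  have key : ∀ j, (1 + gfun (s j) ^ 2) ^ (-γ) * gfun (s j) ^ (2*b+1) * c j ^ (r-1) * |dfun (s j)|
      = 1/2 * (1 - s j) ^ (γ - 2 - b - ((r:ℝ)-1) * a) * (s j) ^ b := fun j => by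
    rw [← hcast]
    exact key_scalar a b γ (r-1) (h0 j) (h1 j)
  rw [hpair, hpair2, Finset.abs_prod]
  calc (∏ j, |dfun (s j)|) *
        ((∏ j, (1 + gfun (s j) ^ 2) ^ (-γ)) * (∏ j, gfun (s j) ^ (2*b+1)) *
          ((∏ j, ∏ k ∈ Finset.Ioi j, (s j - s k)^a) * ∏ j, c j ^ (r-1)))
      = (∏ j, ((1 + gfun (s j) ^ 2) ^ (-γ) * gfun (s j) ^ (2*b+1) * c j ^ (r-1) * |dfun (s j)|)) *
          (∏ j, ∏ k ∈ Finset.Ioi j, (s j - s k)^a) := by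
        simp only [Finset.prod_mul_distrib]; ring
    _ = (∏ j, (1/2 * (1 - s j) ^ (γ-2-b-((r:ℝ)-1)*a) * (s j)^b)) *
          (∏ j, ∏ k ∈ Finset.Ioi j, (s j - s k)^a) := by
        rw [Finset.prod_congr rfl fun j _ => key j]
    _ = (1/2 : ℝ) ^ r *
      ((∏ j, (1 - s j) ^ (γ - 2 - b - ((r : ℝ) - 1) * a)) * (∏ j, (s j) ^ b) *
        ∏ j, ∏ k ∈ Finset.Ioi j, (s j - s k) ^ a) := by
        simp only [Finset.prod_mul_distrib, Finset.prod_const, Finset.card_univ,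
          Fintype.card_fin]
        ring

theorem stmt_14 (r : ℕ) (hr : 1 ≤ r) (a b γ : ℝ) (ha : 0 ≤ a) (hb : 0 ≤ b) :
    (∫⁻ x in {x : Fin r → ℝ | StrictAnti x ∧ ∀ j, 0 < x j},
        ENNReal.ofReal
          ((∏ j, (1 + x j ^ 2) ^ (-γ)) * (∏ j, (x j) ^ (2 * b + 1)) *
            ∏ j, ∏ k ∈ Finset.Ioi j, ((x j) ^ 2 - (x k) ^ 2) ^ a)) =
      (2 : ENNReal)⁻¹ ^ r *
        ∫⁻ s in {s : Fin r → ℝ | StrictAnti s ∧ (∀ j, 0 < s j) ∧ ∀ j, s j < 1},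
          ENNReal.ofReal
            ((∏ j, (1 - s j) ^ (γ - 2 - b - ((r : ℝ) - 1) * a)) * (∏ j, (s j) ^ b) *
              ∏ j, ∏ k ∈ Finset.Ioi j, (s j - s k) ^ a) := by
  classical
  set S : Set (Fin r → ℝ) := {s | StrictAnti s ∧ (∀ j, 0 < s j) ∧ ∀ j, s j < 1} with hSdef
  set φ : (Fin r → ℝ) → (Fin r → ℝ) := fun s j => gfun (s j) with hφdef
  set f' : (Fin r → ℝ) → ((Fin r → ℝ) →L[ℝ] (Fin r → ℝ)) :=
    fun s => LinearMap.toContinuousLinearMap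
      (Matrix.toLin' (Matrix.diagonal fun j => dfun (s j))) with hf'def
  -- basic facts about gfun
  have gmono : ∀ {u v : ℝ}, 0 < u → u < v → v < 1 → gfun u < gfun v := by
    intro u v h0 huv h1
    have hwu : (0:ℝ) < 1 - u := by linarith
    have hwv : (0:ℝ) < 1 - v := by linarith
    rw [gfun, gfun]
    apply Real.sqrt_lt_sqrt (by positivity)
    rw [div_lt_div_iff₀ hwu hwv]
    nlinarith
  have hpsig : ∀ {t : ℝ}, 0 < t → t < 1 → (gfun t)^2 / (1 + (gfun t)^2) = t := by
    intro t h0 h1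
    have hw : (0:ℝ) < 1 - t := by linarith
    have hw' : (1:ℝ) - t ≠ 0 := ne_of_gt hw
    rw [gfun_sq h0 h1]
    field_simp
    ring
  have hgpsi : ∀ {x : ℝ}, 0 < x → gfun (x^2 / (1 + x^2)) = x := by
    intro x hx
    have h1 : (0:ℝ) < 1 + x^2 := by positivity
    have := h1.ne'
    rw [gfun, show x^2/(1+x^2) / (1 - x^2/(1+x^2)) = x^2 by field_simp; ring]
    exact Real.sqrt_sq hx.le
  -- measurability of S
  have hS : MeasurableSet S := by
    have : S = (⋂ (i : Fin r), ⋂ (j : Fin r), {s : Fin r → ℝ | i < j → s j < s i}) ∩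
        ((⋂ j, {s : Fin r → ℝ | 0 < s j}) ∩ ⋂ j, {s : Fin r → ℝ | s j < 1}) := by
      ext s
      simp only [hSdef, Set.mem_setOf_eq, Set.mem_inter_iff, Set.mem_iInter, StrictAnti]
    rw [this]
    refine MeasurableSet.inter ?_ (MeasurableSet.inter ?_ ?_)
    · refine MeasurableSet.iInter fun i => MeasurableSet.iInter fun j => ?_
      by_cases h : i < j
      · have : {s : Fin r → ℝ | i < j → s j < s i} = {s | s j < s i} := by ext; simp [h]
        rw [this]
        exact measurableSet_lt (measurable_pi_apply j) (measurable_pi_apply i)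
      · have : {s : Fin r → ℝ | i < j → s j < s i} = Set.univ := by ext; simp [h]
        rw [this]; exact MeasurableSet.univ
    · exact MeasurableSet.iInter fun j =>
        measurableSet_lt measurable_const (measurable_pi_apply j)
    · exact MeasurableSet.iInter fun j =>
        measurableSet_lt (measurable_pi_apply j) measurable_const
  -- injectivity
  have hinj : Set.InjOn φ S := by
    intro s hs t ht h
    funext j
    have hj : gfun (s j) = gfun (t j) := congrFun h j
    have := hpsig (hs.2.1 j) (hs.2.2 j)
    rw [← this, hj, hpsig (ht.2.1 j) (ht.2.2 j)]
  -- image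
  have himg : φ '' S = {x : Fin r → ℝ | StrictAnti x ∧ ∀ j, 0 < x j} := by
    ext x
    constructor
    · rintro ⟨s, ⟨hanti, h0, h1⟩, rfl⟩
      refine ⟨fun i j hij => gmono (h0 j) (hanti hij) (h1 i), fun j => gfun_pos (h0 j) (h1 j)⟩
    · rintro ⟨hanti, h0⟩
      refine ⟨fun j => (x j)^2 / (1 + (x j)^2), ⟨?_, fun j => ?_, fun j => ?_⟩,
        funext fun j => hgpsi (h0 j)⟩
      · intro i j hij
        have hxi : 0 < x i := h0 i
        have hxj : 0 < x j := h0 j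
        have hlt : x j < x i := hanti hij
        rw [div_lt_div_iff₀ (by positivity) (by positivity)]
        nlinarith
      · have := h0 j; positivity
      · rw [div_lt_one (by positivity)]
        nlinarith [sq_nonneg (x j)]
  -- derivative
  have hderiv : ∀ x ∈ S, HasFDerivWithinAt φ (f' x) S x := by
    intro x hx
    refine HasFDerivAt.hasFDerivWithinAt ?_
    apply hasFDerivAt_pi''
    intro i
    have hcoord0 := HasDerivAt.comp_hasFDerivAt (𝕜 := ℝ) x
        (gfun_hasDerivAt (hx.2.1 i) (hx.2.2 i) :
          HasDerivAt gfun (dfun (x i)) ((fun s : Fin r → ℝ => s i) x))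
        (hasFDerivAt_apply i x)
    have hcoord : HasFDerivAt (fun s : Fin r → ℝ => gfun (s i))
        (dfun (x i) • ContinuousLinearMap.proj i) x := hcoord0
    refine hcoord.congr_fderiv ?_
    ext v
    simp only [hf'def, ContinuousLinearMap.coe_comp', Function.comp_apply,
      ContinuousLinearMap.proj_apply, LinearMap.coe_toContinuousLinearMap',
      Matrix.toLin'_apply, Matrix.mulVec_diagonal, ContinuousLinearMap.smul_apply,
      smul_eq_mul]
  -- determinant
  have hdet : ∀ x : Fin r → ℝ, (f' x).det = ∏ j, dfun (x j) := by
    intro x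
    rw [hf'def]
    show LinearMap.det _ = _
    rw [LinearMap.coe_toContinuousLinearMap, LinearMap.det_toLin', Matrix.det_diagonal]
  -- change of variables
  rw [← himg, lintegral_image_eq_lintegral_abs_det_fderiv_mul volume hS hderiv hinj]
  rw [← lintegral_const_mul' ((2 : ENNReal)⁻¹ ^ r) _
    (by simp [ENNReal.inv_ne_top])]
  refine setLIntegral_congr_fun hS (fun s hs => ?_)
  have h0 := hs.2.1
  have h1 := hs.2.2
  rw [hdet s, ← ENNReal.ofReal_mul (abs_nonneg _)]
  have h2 : (2 : ENNReal)⁻¹ ^ r = ENNReal.ofReal ((1/2 : ℝ) ^ r) := by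
    rw [ENNReal.ofReal_pow (by norm_num)]
    congr 1
    rw [one_div, ENNReal.ofReal_inv_of_pos two_pos]
    norm_num
  rw [h2, ← ENNReal.ofReal_mul (by positivity)]
  congr 1
  exact pointwise_eq r hr a b γ s hs.1 h0 h1
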